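/- Let S be a tree of tritiles of type j ∈ {1,2,3}: for each tritile s ∈ S and each k ≠ j, the coefficients a_{s,k} := ⟨f_k, φ_{s_k}⟩ satisfy the ℓ² bound (Σ_{s∈S} |a_{s,k}|²)^{1/2} ≤ σ_k |I_T|^{1/2}, while sup_{s∈S} |a_{s,j}|/|I_s|^{1/2} ≤ σ_j. Then Σ_{s∈S} |I_s|^{−1/2} ∏_{k=1}^{3} |a_{s,k}| ≤ σ₁σ₂σ₃ |I_T|. -/

import Mathlib

lemma stmt14_cs {ι : Type} (S : Finset ι) (b c : ι → ℝ) (σb σc lenT : ℝ)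
    (hσb : 0 ≤ σb) (hσc : 0 ≤ σc) (hT : 0 ≤ lenT)
    (hb : Real.sqrt (∑ s ∈ S, (b s) ^ 2) ≤ σb * Real.sqrt lenT)
    (hc : Real.sqrt (∑ s ∈ S, (c s) ^ 2) ≤ σc * Real.sqrt lenT) :
    ∑ s ∈ S, |b s| * |c s| ≤ σb * σc * lenT := by
  have h := Real.sum_mul_le_sqrt_mul_sqrt S (fun s => |b s|) (fun s => |c s|)
  simp only [sq_abs] at h
  calc ∑ s ∈ S, |b s| * |c s| ≤
      Real.sqrt (∑ s ∈ S, (b s) ^ 2) * Real.sqrt (∑ s ∈ S, (c s) ^ 2) := h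
    _ ≤ (σb * Real.sqrt lenT) * (σc * Real.sqrt lenT) := by
        apply mul_le_mul hb hc (Real.sqrt_nonneg _)
        positivity
    _ = σb * σc * lenT := by
        rw [show (σb * Real.sqrt lenT) * (σc * Real.sqrt lenT)
          = σb * σc * (Real.sqrt lenT * Real.sqrt lenT) by ring,
          Real.mul_self_sqrt hT]

theorem stmt14 (ι : Type) (S : Finset ι) (a : Fin 3 → ι → ℝ) (σ : Fin 3 → ℝ)
    (lenI : ι → ℝ) (lenT : ℝ) (j : Fin 3)
    (hlen : ∀ s ∈ S, 0 < lenI s) (hlenT : 0 ≤ lenT) (hσ : ∀ k, 0 ≤ σ k)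
    (hl2 : ∀ k, k ≠ j →
      Real.sqrt (∑ s ∈ S, (a k s) ^ 2) ≤ σ k * Real.sqrt lenT)
    (hinf : ∀ s ∈ S, |a j s| ≤ σ j * Real.sqrt (lenI s)) :
    ∑ s ∈ S, (Real.sqrt (lenI s))⁻¹ * ∏ k : Fin 3, |a k s| ≤
      σ 0 * σ 1 * σ 2 * lenT := by
  have key : ∀ (k₁ k₂ : Fin 3), k₁ ≠ j → k₂ ≠ j →
      ∑ s ∈ S, σ j * (|a k₁ s| * |a k₂ s|) ≤ σ j * (σ k₁ * σ k₂) * lenT := by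
    intro k₁ k₂ h1 h2
    rw [← Finset.mul_sum]
    have := stmt14_cs S (a k₁) (a k₂) (σ k₁) (σ k₂) lenT (hσ k₁) (hσ k₂) hlenT
      (hl2 k₁ h1) (hl2 k₂ h2)
    calc σ j * ∑ s ∈ S, |a k₁ s| * |a k₂ s| ≤ σ j * (σ k₁ * σ k₂ * lenT) :=
          mul_le_mul_of_nonneg_left this (hσ j)
      _ = σ j * (σ k₁ * σ k₂) * lenT := by ring
  have step : ∀ (k₁ k₂ : Fin 3), ∀ s ∈ S,
      (Real.sqrt (lenI s))⁻¹ * (|a j s| * |a k₁ s| * |a k₂ s|) ≤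
        σ j * (|a k₁ s| * |a k₂ s|) := by
    intro k₁ k₂ s hs
    have hpos : 0 < Real.sqrt (lenI s) := Real.sqrt_pos.mpr (hlen s hs)
    rw [show (Real.sqrt (lenI s))⁻¹ * (|a j s| * |a k₁ s| * |a k₂ s|)
      = ((Real.sqrt (lenI s))⁻¹ * |a j s|) * (|a k₁ s| * |a k₂ s|) by ring]
    apply mul_le_mul_of_nonneg_right _ (by positivity)
    rw [inv_mul_le_iff₀ hpos, mul_comm]
    exact hinf s hs
  fin_cases j <;> simp only [Fin.prod_univ_three] at *
  · calc ∑ s ∈ S, (Real.sqrt (lenI s))⁻¹ * (|a 0 s| * |a 1 s| * |a 2 s|)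
        ≤ ∑ s ∈ S, σ 0 * (|a 1 s| * |a 2 s|) := Finset.sum_le_sum (step 1 2)
      _ ≤ σ 0 * (σ 1 * σ 2) * lenT := key 1 2 (by decide) (by decide)
      _ = σ 0 * σ 1 * σ 2 * lenT := by ring
  · calc ∑ s ∈ S, (Real.sqrt (lenI s))⁻¹ * (|a 0 s| * |a 1 s| * |a 2 s|)
        ≤ ∑ s ∈ S, σ 1 * (|a 0 s| * |a 2 s|) := by
          apply Finset.sum_le_sum
          intro s hs
          have := step 0 2 s hs
          calc (Real.sqrt (lenI s))⁻¹ * (|a 0 s| * |a 1 s| * |a 2 s|)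
              = (Real.sqrt (lenI s))⁻¹ * (|a 1 s| * |a 0 s| * |a 2 s|) := by ring
            _ ≤ σ 1 * (|a 0 s| * |a 2 s|) := this
      _ ≤ σ 1 * (σ 0 * σ 2) * lenT := key 0 2 (by decide) (by decide)
      _ = σ 0 * σ 1 * σ 2 * lenT := by ring
  · calc ∑ s ∈ S, (Real.sqrt (lenI s))⁻¹ * (|a 0 s| * |a 1 s| * |a 2 s|)
        ≤ ∑ s ∈ S, σ 2 * (|a 0 s| * |a 1 s|) := by
          apply Finset.sum_le_sum
          intro s hs
          have := step 0 1 s hs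
          calc (Real.sqrt (lenI s))⁻¹ * (|a 0 s| * |a 1 s| * |a 2 s|)
              = (Real.sqrt (lenI s))⁻¹ * (|a 2 s| * |a 0 s| * |a 1 s|) := by ring
            _ ≤ σ 2 * (|a 0 s| * |a 1 s|) := this
      _ ≤ σ 2 * (σ 0 * σ 1) * lenT := key 0 1 (by decide) (by decide)
      _ = σ 0 * σ 1 * σ 2 * lenT := by ring
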